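/- arXiv:2308.03485 — 2 statements merged into one kernel-verified Lean document; each statement's English description precedes it below -/
import Mathlib

section
/- Any two maximal paths that share a vertex are equal: if l₁ and l₂ are maximal paths and some vertex occurs in both l₁ and l₂, then l₁ = l₂. Consequently, the maximal paths of the graph (the set Paths computed by the recovery procedure of the recoverable swap algorithm) are pairwise node-disjoint. -/
/-- `l` is a path in the directed graph given by edge relation `r`:
a nonempty list of pairwise-distinct vertices such that consecutive
elements are related by `r`. -/
def IsPath {V : Type*} (r : V → V → Prop) (l : List V) : Prop :=
  l ≠ [] ∧ l.Nodup ∧ l.Chain' r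

/-- `l` is a maximal path: a path that cannot be extended at either end. -/
def IsMaxPath {V : Type*} (r : V → V → Prop) (l : List V) : Prop :=
  IsPath r l ∧
    (∀ w, ∀ h : l ≠ [], ¬ r w (l.head h)) ∧
    (∀ w, ∀ h : l ≠ [], ¬ r (l.getLast h) w)


private lemma fwd_unique {V : Type*} {r : V → V → Prop}
    (hsucc : ∀ u v w, r u v → r u w → v = w) :
    ∀ (s₁ : List V) (v : V) (s₂ : List V), (v :: s₁).Chain' r → (v :: s₂).Chain' r →
      (∀ w, ¬ r ((v :: s₁).getLast (by simp)) w) →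
      (∀ w, ¬ r ((v :: s₂).getLast (by simp)) w) → s₁ = s₂ := by
  intro s₁
  induction s₁ with
  | nil =>
    intro v s₂ _ hc₂ hl₁ _
    cases s₂ with
    | nil => rfl
    | cons u s₂ =>
      exact absurd (List.isChain_cons_cons.1 hc₂).1 (by simpa using hl₁ u)
  | cons u s₁ ih =>
    intro v s₂ hc₁ hc₂ hl₁ hl₂
    cases s₂ with
    | nil =>
      exact absurd (List.isChain_cons_cons.1 hc₁).1 (by simpa using hl₂ u)
    | cons u' s₂ =>
      obtain rfl : u = u' := hsucc v u u' (List.isChain_cons_cons.1 hc₁).1 (List.isChain_cons_cons.1 hc₂).1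
      have := ih u s₂ (List.isChain_cons_cons.1 hc₁).2 (List.isChain_cons_cons.1 hc₂).2
        (by intro w; simpa [List.getLast_cons] using hl₁ w)
        (by intro w; simpa [List.getLast_cons] using hl₂ w)
      rw [this]

/-- Any two maximal paths sharing a vertex are equal; hence the maximal
paths of the graph are pairwise node-disjoint. -/
theorem maximal_paths_disjoint {V : Type*} (r : V → V → Prop) (t : V → ℕ)
    (hsucc : ∀ u v w, r u v → r u w → v = w)
    (hpred : ∀ u v w, r u w → r v w → u = v)
    (ht : ∀ u v, r u v → t v < t u)
    (l₁ l₂ : List V) (h₁ : IsMaxPath r l₁) (h₂ : IsMaxPath r l₂)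
    (v : V) (hv₁ : v ∈ l₁) (hv₂ : v ∈ l₂) :
    l₁ = l₂ := by
  obtain ⟨p₁, s₁, rfl⟩ := List.append_of_mem hv₁
  obtain ⟨p₂, s₂, rfl⟩ := List.append_of_mem hv₂
  obtain ⟨⟨hne₁, hnd₁, hc₁⟩, hh₁, hl₁⟩ := h₁
  obtain ⟨⟨hne₂, hnd₂, hc₂⟩, hh₂, hl₂⟩ := h₂
  have hs : s₁ = s₂ := by
    refine fwd_unique hsucc s₁ v s₂
      (hc₁.suffix ⟨p₁, rfl⟩) (hc₂.suffix ⟨p₂, rfl⟩) ?_ ?_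
    · intro w hw
      exact hl₁ w hne₁ (by rwa [List.getLast_append_of_ne_nil _ (List.cons_ne_nil _ _)])
    · intro w hw
      exact hl₂ w hne₂ (by rwa [List.getLast_append_of_ne_nil _ (List.cons_ne_nil _ _)])
  have hrev₁ : (p₁ ++ v :: s₁).reverse = s₁.reverse ++ v :: p₁.reverse := by simp
  have hrev₂ : (p₂ ++ v :: s₂).reverse = s₂.reverse ++ v :: p₂.reverse := by simp
  have hp : p₁.reverse = p₂.reverse := by
    refine fwd_unique (fun u v w h h' => hpred v w u h h') p₁.reverse v p₂.reverse ?_ ?_ ?_ ?_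
    · exact (List.isChain_reverse.2 (by have h : List.IsChain r (p₁ ++ v :: s₁) := hc₁; simpa using h)).suffix ⟨s₁.reverse, hrev₁.symm⟩
    · exact (List.isChain_reverse.2 (by have h : List.IsChain r (p₂ ++ v :: s₂) := hc₂; simpa using h)).suffix ⟨s₂.reverse, hrev₂.symm⟩
    · intro w hw
      refine hh₁ w hne₁ ?_
      have : (v :: p₁.reverse).getLast (by simp) = (p₁ ++ v :: s₁).head hne₁ := by
        have h1 : (v :: p₁.reverse).getLast? = (p₁ ++ v :: s₁).head? := by
          rw [← List.getLast?_reverse, hrev₁, List.getLast?_append]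
          simp [List.getLast?_eq_getLast (l := v :: p₁.reverse) (by simp)]
        rw [List.getLast?_eq_getLast (l := v :: p₁.reverse) (by simp),
          List.head?_eq_head hne₁] at h1
        exact Option.some_injective _ h1
      rwa [this] at hw
    · intro w hw
      refine hh₂ w hne₂ ?_
      have : (v :: p₂.reverse).getLast (by simp) = (p₂ ++ v :: s₂).head hne₂ := by
        have h1 : (v :: p₂.reverse).getLast? = (p₂ ++ v :: s₂).head? := by
          rw [← List.getLast?_reverse, hrev₂, List.getLast?_append]
          simp [List.getLast?_eq_getLast (l := v :: p₂.reverse) (by simp)]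
        rw [List.getLast?_eq_getLast (l := v :: p₂.reverse) (by simp),
          List.head?_eq_head hne₂] at h1
        exact Option.some_injective _ h1
      rwa [this] at hw
  rw [List.reverse_injective hp, hs]
end

section
/- Let l₁, …, l_k be nonempty, pairwise disjoint paths whose elements together exhaust V. Let r' be the relation r augmented with the connector edges from the last element of lᵢ to the first element of lᵢ₊₁ for each 1 ≤ i < k (modeling the prev-pointer assignments made by the recovery procedure when mending fragments). Then the concatenation L = l₁ ++ ⋯ ++ l_k satisfies r' aᵢ aᵢ₊₁ for all consecutive elements, and every vertex of V occurs exactly once in L; that is, after the fragments are linked there is a single path containing all nodes. -/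
/-- Mending the fragments: if `ls 0, …, ls (k-1)` are nonempty, pairwise
disjoint paths that together exhaust `V`, and `r'` is `r` augmented with the
connector edges from the last element of each fragment to the first element
of the next, then the concatenation of all fragments is a single path
(consecutive elements are `r'`-related) containing every vertex of `V`
exactly once. -/
theorem mended_fragments_form_single_path {V : Type*} [DecidableEq V]
    (r : V → V → Prop) (k : ℕ) (ls : Fin k → List V)
    (hpath : ∀ i, IsPath r (ls i))
    (hdisj : ∀ i j, i ≠ j → ∀ v, v ∈ ls i → v ∉ ls j)
    (hexh : ∀ v : V, ∃ i, v ∈ ls i)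
    (r' : V → V → Prop)
    (hr' : ∀ u v, r' u v ↔ r u v ∨
      ∃ i : Fin k, ∃ hi : (i : ℕ) + 1 < k,
        (ls i).getLast? = some u ∧ (ls ⟨(i : ℕ) + 1, hi⟩).head? = some v) :
    ((List.ofFn ls).flatten).Chain' r' ∧
      ∀ v : V, ((List.ofFn ls).flatten).count v = 1 := by
  have hne : ([] : List V) ∉ List.ofFn ls := by
    simp only [List.mem_ofFn, Set.mem_range, not_exists]
    intro i h
    exact (hpath i).1 h
  constructor
  · rw [List.Chain', List.isChain_flatten hne]
    constructor
    · intro l hl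
      rw [List.mem_ofFn] at hl
      obtain ⟨i, rfl⟩ := hl
      exact ((hpath i).2.2).imp (fun a b h => (hr' a b).2 (Or.inl h))
    · rw [List.isChain_iff_getElem]
      intro n hn
      simp only [List.length_ofFn] at hn
      have hn1 : n + 1 < k := by omega
      have hnk : n < k := by omega
      intro x hx y hy
      simp only [List.getElem_ofFn] at hx hy
      refine (hr' x y).2 (Or.inr ⟨⟨n, hnk⟩, hn1, ?_, ?_⟩)
      · exact hx
      · exact hy
  · intro v
    obtain ⟨i, hi⟩ := hexh v
    rw [List.count_flatten]
    have hmap : (List.ofFn ls).map (List.count v) = List.ofFn (fun j => (ls j).count v) := by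
      simp [List.map_ofFn, Function.comp_def]
    rw [hmap, List.sum_ofFn]
    rw [Finset.sum_eq_single i]
    · exact List.count_eq_one_of_mem (hpath i).2.1 hi
    · intro j _ hji
      exact List.count_eq_zero.2 (fun hv => hdisj i j (fun h => hji h.symm) v hi hv)
    · intro h
      exact absurd (Finset.mem_univ i) h
end
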